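/- Let p be a prime, let r be a positive integer, let V ⊆ ℤ_p^r be a subset, and let S ⊆ ℕ be a subset. For each 1 ≤ k ≤ r, let P_k ∈ ℤ_p⟨z⟩ be a strictly convergent power series, and define P : S → ℤ_p^r by P(n) = (P₁(n), …, P_r(n)). Suppose that the set {n ∈ S : P(n) = y} is empty whenever y ∈ ℤ_p^r \ V and is finite whenever y ∈ V. Then there exists N ≥ 0 such that #{n ∈ S : P(n) = y} ≤ N for every y ∈ V. -/

import Mathlib

open Filter

variable {p : ℕ} [Fact p.Prime]

/-- A sequence of coefficients in `ℤ_p` is strictly convergent if `|a_m|_p → 0`;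
such a sequence is the coefficient sequence of an element of the Tate algebra `ℤ_p⟨z⟩`. -/
def StrictlyConvergent (a : ℕ → ℤ_[p]) : Prop :=
  Tendsto (fun m => ‖a m‖) atTop (nhds 0)

/-- Evaluation of a strictly convergent power series (given by its coefficients) at a point
of `ℤ_p`. -/
noncomputable def scEval (a : ℕ → ℤ_[p]) (x : ℤ_[p]) : ℤ_[p] :=
  ∑' m : ℕ, a m * x ^ m

open IsUltrametricDist

lemma norm_term_le (a : ℕ → ℤ_[p]) (x : ℤ_[p]) (m : ℕ) : ‖a m * x ^ m‖ ≤ ‖a m‖ := by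
  calc ‖a m * x ^ m‖ ≤ ‖a m‖ * ‖x ^ m‖ := norm_mul_le _ _
  _ ≤ ‖a m‖ * 1 := mul_le_mul_of_nonneg_left
      (by simpa using pow_le_one₀ (norm_nonneg x) x.norm_le_one) (norm_nonneg _)
  _ = ‖a m‖ := mul_one _

lemma summable_scEval {a : ℕ → ℤ_[p]} (ha : StrictlyConvergent a) (x : ℤ_[p]) :
    Summable (fun m => a m * x ^ m) := by
  refine NonarchimedeanAddGroup.summable_of_tendsto_cofinite_zero ?_
  rw [Nat.cofinite_eq_atTop]
  exact squeeze_zero_norm (norm_term_le a x) ha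

lemma exists_bound_lt {a : ℕ → ℤ_[p]} (ha : StrictlyConvergent a) {M : ℝ} (hM : 0 < M)
    (N : ℕ) (h : ∀ m, N < m → ‖a m‖ < M) :
    ∃ C : ℝ, 0 ≤ C ∧ C < M ∧ ∀ m, N < m → ‖a m‖ ≤ C := by
  have h2 : ∀ᶠ m in atTop, ‖a m‖ < M / 2 := ha.eventually (gt_mem_nhds (by linarith))
  obtain ⟨K, hK⟩ := eventually_atTop.mp h2
  classical
  set s : Finset ℝ := insert (M / 2) ((Finset.Ioc N K).image fun m => ‖a m‖) with hs
  have hmem : M / 2 ∈ s := Finset.mem_insert_self _ _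
  have hne : s.Nonempty := ⟨_, hmem⟩
  refine ⟨s.max' hne, ?_, ?_, ?_⟩
  · exact le_trans (by linarith) (Finset.le_max' _ _ hmem)
  · rw [Finset.max'_lt_iff s hne]
    intro y hy
    rcases Finset.mem_insert.mp hy with rfl | hy
    · linarith
    · obtain ⟨m, hm, rfl⟩ := Finset.mem_image.mp hy
      exact h m (Finset.mem_Ioc.mp hm).1
  · intro m hm
    by_cases hmK : m ≤ K
    · exact Finset.le_max' s _ (Finset.mem_insert_of_mem
        (Finset.mem_image_of_mem _ (Finset.mem_Ioc.mpr ⟨hm, hmK⟩)))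
    · exact le_trans (hK m (le_of_not_ge hmK)).le (Finset.le_max' _ _ hmem)

noncomputable def shiftSeries (b : ℕ → ℤ_[p]) (α : ℤ_[p]) : ℕ → ℤ_[p] :=
  fun i => ∑' j : ℕ, b (i + 1 + j) * α ^ j

lemma norm_shiftSeries_le {b : ℕ → ℤ_[p]} (α : ℤ_[p]) {C : ℝ} (hC : 0 ≤ C) (i : ℕ)
    (h : ∀ m, i < m → ‖b m‖ ≤ C) : ‖shiftSeries b α i‖ ≤ C := by
  refine norm_tsum_le_of_forall_le_of_nonneg hC fun j => ?_
  exact le_trans (norm_term_le (fun j => b (i + 1 + j)) α j) (h _ (by omega))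

lemma strictlyConvergent_shiftSeries {b : ℕ → ℤ_[p]} (hb : StrictlyConvergent b) (α : ℤ_[p]) :
    StrictlyConvergent (shiftSeries b α) := by
  rw [StrictlyConvergent, Metric.tendsto_atTop]
  intro ε hε
  have h2 : ∀ᶠ m in atTop, ‖b m‖ < ε / 2 := hb.eventually (gt_mem_nhds (by linarith))
  obtain ⟨K, hK⟩ := eventually_atTop.mp h2
  refine ⟨K, fun i hi => ?_⟩
  rw [Real.dist_eq, sub_zero, abs_of_nonneg (norm_nonneg _)]
  have : ‖shiftSeries b α i‖ ≤ ε / 2 :=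
    norm_shiftSeries_le α (by linarith) i (fun m hm => (hK m (by omega)).le)
  linarith

lemma strictlyConvergent_shift {b : ℕ → ℤ_[p]} (hb : StrictlyConvergent b) (k : ℕ) :
    StrictlyConvergent (fun j => b (k + j)) := by
  have h := hb.comp (tendsto_add_atTop_nat k)
  simpa [StrictlyConvergent, Function.comp_def, add_comm] using h

lemma scEval_factor {b : ℕ → ℤ_[p]} (hb : StrictlyConvergent b) {α : ℤ_[p]}
    (hα : scEval b α = 0) (x : ℤ_[p]) :
    scEval b x = (x - α) * scEval (shiftSeries b α) x := by
  classical
  set F : ℕ → ℕ → ℤ_[p] := fun m i => if i < m then b m * (x ^ i * α ^ (m - 1 - i)) else 0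
    with hF
  have hFnorm : ∀ m i, ‖F m i‖ ≤ ‖b m‖ := by
    intro m i
    by_cases h : i < m
    · simp only [hF, if_pos h]
      calc ‖b m * (x ^ i * α ^ (m - 1 - i))‖ ≤ ‖b m‖ * ‖x ^ i * α ^ (m - 1 - i)‖ :=
            norm_mul_le _ _
        _ ≤ ‖b m‖ * 1 := mul_le_mul_of_nonneg_left (PadicInt.norm_le_one _) (norm_nonneg _)
        _ = ‖b m‖ := mul_one _
    · simp [hF, h]
  have hrow : ∀ m, Summable (F m) := by
    intro m
    refine summable_of_ne_finset_zero (s := Finset.range m) fun i hi => ?_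
    simp only [hF]
    rw [if_neg (by simpa using hi)]
  have hcol : ∀ i, Summable (fun m => F m i) :=
    fun i => NonarchimedeanAddGroup.summable_of_tendsto_cofinite_zero
      (by rw [Nat.cofinite_eq_atTop]; exact squeeze_zero_norm (fun m => hFnorm m i) hb)
  have hFsum : Summable (Function.uncurry F) := by
    refine NonarchimedeanAddGroup.summable_of_tendsto_cofinite_zero ?_
    rw [Metric.tendsto_nhds]
    intro ε hε
    rw [Filter.eventually_cofinite]
    obtain ⟨K, hK⟩ := eventually_atTop.mp (hb.eventually (gt_mem_nhds hε))
    refine Set.Finite.subset ((Finset.range K ×ˢ Finset.range K : Finset (ℕ × ℕ))).finite_toSet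
      fun q hq => ?_
    simp only [Set.mem_setOf_eq, not_lt, dist_zero_right] at hq
    rw [show Function.uncurry F q = F q.1 q.2 from rfl] at hq
    have h1 : q.1 < K := by
      by_contra h
      have h3 := lt_of_le_of_lt (le_trans hq (hFnorm q.1 q.2)) (hK q.1 (by omega))
      linarith
    have h2 : q.2 < q.1 := by
      by_contra h
      have h0 : F q.1 q.2 = 0 := by simp only [hF]; rw [if_neg (by omega)]
      rw [h0] at hq
      simp at hq; linarith
    simp only [Finset.coe_product, Set.mem_prod, Finset.coe_range, Set.mem_Iio]
    exact ⟨h1, by omega⟩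
  have key2 : ∀ i, (∑' m, F m i) = shiftSeries b α i * x ^ i := by
    intro i
    have hinj : Function.Injective (fun j : ℕ => i + 1 + j) := fun a b h => by
      simp only [] at h; omega
    have hzero : ∀ m, m ∉ Set.range (fun j : ℕ => i + 1 + j) → F m i = 0 := by
      intro m hm
      have hmi : ¬ i < m := by
        intro h
        exact hm ⟨m - i - 1, by simp only []; omega⟩
      simp only [hF]; rw [if_neg hmi]
    rw [← hinj.tsum_eq (f := fun m => F m i) (Function.support_subset_iff'.mpr hzero)]
    have heq : ∀ j, F (i + 1 + j) i = (b (i + 1 + j) * α ^ j) * x ^ i := by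
      intro j
      simp only [hF]
      rw [if_pos (by omega : i < i + 1 + j)]
      have hj : i + 1 + j - 1 - i = j := by omega
      rw [hj]; ring
    rw [tsum_congr heq]
    exact Summable.tsum_mul_right _ (summable_scEval (strictlyConvergent_shift hb (i + 1)) α)
  have key1 : (∑' (i : ℕ) (m : ℕ), F m i) = ∑' (m : ℕ) (i : ℕ), F m i :=
    Summable.tsum_comm' hFsum hrow hcol
  have hterm : ∀ m, b m * x ^ m - b m * α ^ m = (∑' i, F m i) * (x - α) := by
    intro m
    rw [tsum_eq_sum (s := Finset.range m) (fun i hi => by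
      simp only [hF]; rw [if_neg (by simpa using hi)])]
    have : (∑ i ∈ Finset.range m, F m i) =
        b m * ∑ i ∈ Finset.range m, x ^ i * α ^ (m - 1 - i) := by
      rw [Finset.mul_sum]
      refine Finset.sum_congr rfl fun i hi => ?_
      simp only [hF]; rw [if_pos (by simpa using hi)]
    rw [this, mul_assoc, geom_sum₂_mul, mul_sub]
  calc scEval b x = scEval b x - scEval b α := by rw [hα, sub_zero]
    _ = ∑' m, (b m * x ^ m - b m * α ^ m) :=
        (Summable.tsum_sub (summable_scEval hb x) (summable_scEval hb α)).symm
    _ = ∑' m, (∑' i, F m i) * (x - α) := tsum_congr hterm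
    _ = (∑' (m : ℕ) (i : ℕ), F m i) * (x - α) := Summable.tsum_mul_right _
        (NonarchimedeanAddGroup.summable_of_tendsto_cofinite_zero (by
          rw [Nat.cofinite_eq_atTop]
          exact squeeze_zero_norm
            (fun m => norm_tsum_le_of_forall_le_of_nonneg (norm_nonneg (b m)) (hFnorm m)) hb))
    _ = (∑' (i : ℕ) (m : ℕ), F m i) * (x - α) := by rw [key1]
    _ = (∑' i, shiftSeries b α i * x ^ i) * (x - α) := by rw [tsum_congr key2]
    _ = (x - α) * scEval (shiftSeries b α) x := by rw [mul_comm, scEval]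

lemma scEval_split {b : ℕ → ℤ_[p]} (hb : StrictlyConvergent b) (x : ℤ_[p]) :
    scEval b x = b 0 + ∑' m : ℕ, b (m + 1) * x ^ (m + 1) := by
  rw [scEval, Summable.tsum_eq_zero_add (summable_scEval hb x), pow_zero, mul_one]

lemma strassmann (N : ℕ) : ∀ (b : ℕ → ℤ_[p]) (M : ℝ), StrictlyConvergent b →
    ‖b N‖ = M → (∀ m, N < m → ‖b m‖ < M) → (∀ m, ‖b m‖ ≤ M) →
    ∀ T : Finset ℤ_[p], (∀ x ∈ T, scEval b x = 0) → T.card ≤ N := by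
  induction N with
  | zero =>
    intro b M hb hN hlt _ T hT
    have hM : 0 < M := lt_of_le_of_lt (norm_nonneg (b 1)) (hlt 1 one_pos)
    obtain ⟨C, hC0, hCM, hC⟩ := exists_bound_lt hb hM 0 hlt
    rw [Nat.le_zero, Finset.card_eq_zero]
    rw [Finset.eq_empty_iff_forall_notMem]
    intro x hx
    have h0 := hT x hx
    rw [scEval_split hb] at h0
    have htail : ‖∑' m : ℕ, b (m + 1) * x ^ (m + 1)‖ ≤ C :=
      norm_tsum_le_of_forall_le_of_nonneg hC0 fun m =>
        le_trans (norm_term_le b x (m + 1)) (hC _ (by omega))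
    have hb0 : b 0 = -∑' m : ℕ, b (m + 1) * x ^ (m + 1) := by
      rw [eq_neg_iff_add_eq_zero]; exact h0
    have : M ≤ C := by
      rw [← hN, hb0, norm_neg]
      exact htail
    linarith
  | succ N ih =>
    intro b M hb hN hlt hall T hT
    classical
    rcases T.eq_empty_or_nonempty with rfl | ⟨α, hα⟩
    · simp
    have hαz : scEval b α = 0 := hT α hα
    have hM : 0 < M := lt_of_le_of_lt (norm_nonneg _) (hlt (N + 2) (by omega))
    obtain ⟨C, hC0, hCM, hC⟩ := exists_bound_lt hb hM (N + 1) hlt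
    set c := shiftSeries b α with hc
    have hcs : StrictlyConvergent c := strictlyConvergent_shiftSeries hb α
    have hcN : ‖c N‖ = M := by
      have hsplit : c N = b (N + 1 + 0) * α ^ 0 + ∑' j : ℕ, b (N + 1 + (j + 1)) * α ^ (j + 1) :=
        Summable.tsum_eq_zero_add (summable_scEval (strictlyConvergent_shift hb (N + 1)) α)
      rw [hc] at hsplit
      have htail : ‖∑' j : ℕ, b (N + 1 + (j + 1)) * α ^ (j + 1)‖ ≤ C :=
        norm_tsum_le_of_forall_le_of_nonneg hC0 fun j =>
          le_trans (norm_term_le (fun j => b (N + 1 + j)) α (j + 1)) (hC _ (by omega))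
      have hlt2 : ‖∑' j : ℕ, b (N + 1 + (j + 1)) * α ^ (j + 1)‖ < ‖b (N + 1 + 0) * α ^ 0‖ := by
        rw [pow_zero, mul_one]
        have : (N + 1 + 0) = N + 1 := by omega
        rw [this, hN]
        linarith
      rw [hc, hsplit]
      rw [norm_add_eq_max_of_norm_ne_norm (ne_of_gt hlt2)]
      rw [max_eq_left (le_of_lt hlt2), pow_zero, mul_one]
      have : (N + 1 + 0) = N + 1 := by omega
      rw [this, hN]
    have hclt : ∀ m, N < m → ‖c m‖ < M := by
      intro m hm
      refine lt_of_le_of_lt ?_ hCM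
      exact norm_shiftSeries_le α hC0 m fun k hk => hC k (by omega)
    have hcall : ∀ m, ‖c m‖ ≤ M :=
      fun m => norm_shiftSeries_le α (le_of_lt hM) m fun k _ => hall k
    have herase : (T.erase α).card ≤ N := by
      refine ih c M hcs hcN hclt hcall _ fun x hx => ?_
      obtain ⟨hxα, hxT⟩ := Finset.mem_erase.mp hx
      have h0 := hT x hxT
      rw [scEval_factor hb hαz x] at h0
      rcases mul_eq_zero.mp h0 with h | h
      · exact absurd (sub_eq_zero.mp h) hxα
      · exact h
    calc T.card ≤ (T.erase α).card + 1 := by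
          rw [Finset.card_erase_of_mem hα]
          omega
      _ ≤ N + 1 := by omega

lemma strassmann_uniform {a : ℕ → ℤ_[p]} (ha : StrictlyConvergent a) {m₀ : ℕ} (hm₀ : 0 < m₀)
    (hne : a m₀ ≠ 0) :
    ∃ N : ℕ, ∀ (y : ℤ_[p]) (T : Finset ℤ_[p]), (∀ x ∈ T, scEval a x = y) → T.card ≤ N := by
  classical
  have hε : 0 < ‖a m₀‖ := norm_pos_iff.mpr hne
  obtain ⟨K, hK⟩ := eventually_atTop.mp (ha.eventually (gt_mem_nhds hε))
  set E := (Finset.range K).filter (fun m => ‖a m₀‖ ≤ ‖a m‖ ∧ 1 ≤ m) with hE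
  have hm₀E : m₀ ∈ E := by
    refine Finset.mem_filter.mpr ⟨Finset.mem_range.mpr ?_, le_refl _, hm₀⟩
    by_contra h
    exact lt_irrefl _ (hK m₀ (by omega))
  have hEne : E.Nonempty := ⟨m₀, hm₀E⟩
  set M := E.sup' hEne (fun m => ‖a m‖) with hM
  have hεM : ‖a m₀‖ ≤ M := by rw [hM]; exact Finset.le_sup' (fun m => ‖a m‖) hm₀E
  have hMpos : 0 < M := lt_of_lt_of_le hε hεM
  obtain ⟨Nm, hNm, hNeq⟩ := Finset.exists_mem_eq_sup' hEne (fun m => ‖a m‖)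
  set A := E.filter (fun m => ‖a m‖ = M) with hA
  have hAne : A.Nonempty := ⟨Nm, Finset.mem_filter.mpr ⟨hNm, hNeq.symm⟩⟩
  set N := A.max' hAne with hN
  have hNA : N ∈ A := A.max'_mem hAne
  have hNE : N ∈ E := (Finset.mem_filter.mp hNA).1
  have hNval : ‖a N‖ = M := (Finset.mem_filter.mp hNA).2
  have hN1 : 1 ≤ N := ((Finset.mem_filter.mp hNE).2).2
  have hallM : ∀ m, 1 ≤ m → ‖a m‖ ≤ M := by
    intro m hm
    by_cases hmE : m ∈ E
    · rw [hM]; exact Finset.le_sup' (fun m => ‖a m‖) hmE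
    · by_cases hmK : m < K
      · have h1 : ¬(‖a m₀‖ ≤ ‖a m‖ ∧ 1 ≤ m) := fun h =>
          hmE (Finset.mem_filter.mpr ⟨Finset.mem_range.mpr hmK, h⟩)
        have h2 : ¬ ‖a m₀‖ ≤ ‖a m‖ := fun hp => h1 ⟨hp, hm⟩
        exact le_trans (le_of_not_ge h2) hεM
      · exact le_trans (hK m (le_of_not_gt hmK)).le hεM
  have hgt : ∀ m, N < m → ‖a m‖ < M := by
    intro m hm
    have h1m : 1 ≤ m := by omega
    rcases lt_or_eq_of_le (hallM m h1m) with h | h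
    · exact h
    · exfalso
      by_cases hmE : m ∈ E
      · have : m ∈ A := Finset.mem_filter.mpr ⟨hmE, h⟩
        exact absurd (Finset.le_max' A m this) (by omega)
      · by_cases hmK : m < K
        · have h1 : ¬(‖a m₀‖ ≤ ‖a m‖ ∧ 1 ≤ m) := fun hh =>
            hmE (Finset.mem_filter.mpr ⟨Finset.mem_range.mpr hmK, hh⟩)
          push_neg at h1
          have := h1 (by rw [h]; exact hεM)
          omega
        · have := hK m (le_of_not_gt hmK)
          rw [h] at this
          linarith
  refine ⟨N, fun y T hT => ?_⟩
  set b : ℕ → ℤ_[p] := fun m => if m = 0 then a 0 - y else a m with hb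
  have hbs : StrictlyConvergent b := by
    refine ha.congr' ?_
    filter_upwards [eventually_ge_atTop 1] with m hm
    rw [hb]; simp only []; rw [if_neg (by omega)]
  have hbeval : ∀ x, scEval b x = scEval a x - y := by
    intro x
    have hsummy : Summable (fun m : ℕ => (if m = 0 then y else 0) * x ^ m) :=
      summable_of_ne_finset_zero (s := {0}) (by
        intro m hm
        rw [if_neg (by simpa using hm), zero_mul])
    have hterm : ∀ m : ℕ, b m * x ^ m = a m * x ^ m - (if m = 0 then y else 0) * x ^ m := by
      intro m
      rw [hb]
      by_cases h : m = 0
      · subst h; simp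
      · simp only [if_neg h]; ring
    rw [scEval, tsum_congr hterm, Summable.tsum_sub (summable_scEval ha x) hsummy]
    congr 1
    rw [tsum_eq_single 0 (fun m hm => by rw [if_neg hm, zero_mul]), if_pos rfl, pow_zero, mul_one]
  have hbN : ‖b N‖ = M := by
    rw [hb]; simp only []; rw [if_neg (by omega)]; exact hNval
  have hblt : ∀ m, N < m → ‖b m‖ < M := by
    intro m hm
    rw [hb]; simp only []; rw [if_neg (by omega)]
    exact hgt m hm
  by_cases hcase : ‖a 0 - y‖ ≤ M
  · have hball : ∀ m, ‖b m‖ ≤ M := by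
      intro m
      rw [hb]
      by_cases h : m = 0
      · simp only [if_pos h]; exact hcase
      · simp only [if_neg h]; exact hallM m (by omega)
    exact strassmann N b M hbs hbN hblt hball T fun x hx => by
      rw [hbeval, hT x hx, sub_self]
  · rw [show T.card = (∅ : Finset ℤ_[p]).card from by
      congr 1
      rw [Finset.eq_empty_iff_forall_notMem]
      intro x hx
      have h0 : scEval b x = 0 := by rw [hbeval, hT x hx, sub_self]
      rw [scEval_split hbs] at h0
      have htail : ‖∑' m : ℕ, b (m + 1) * x ^ (m + 1)‖ ≤ M :=
        norm_tsum_le_of_forall_le_of_nonneg (le_of_lt hMpos) fun m =>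
          le_trans (norm_term_le b x (m + 1)) (by
            rw [hb]; simp only []; rw [if_neg (by omega)]
            exact hallM (m + 1) (by omega))
      have hb0 : b 0 = -∑' m : ℕ, b (m + 1) * x ^ (m + 1) := by
        rw [eq_neg_iff_add_eq_zero]; exact h0
      have hb0n : ‖b 0‖ ≤ M := by rw [hb0, norm_neg]; exact htail
      rw [hb] at hb0n; simp only [if_pos rfl] at hb0n
      exact hcase hb0n]
    simp


/-- a uniform bound for the number of solutions of `P(n) = y`, `n ∈ S`, for a
tuple `P` of strictly convergent `p`-adic power series, provided each such solution set is
finite (and empty for `y ∉ V`). -/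
theorem uniform_bound_piecewise_analytic
    (p : ℕ) [Fact p.Prime] (r : ℕ) (hr : 0 < r)
    (V : Set (Fin r → ℤ_[p])) (S : Set ℕ)
    (P : Fin r → ℕ → ℤ_[p]) (hP : ∀ k, StrictlyConvergent (P k))
    (hempty : ∀ y ∉ V, {n ∈ S | (fun k => scEval (P k) (n : ℤ_[p])) = y} = ∅)
    (hfin : ∀ y ∈ V, {n ∈ S | (fun k => scEval (P k) (n : ℤ_[p])) = y}.Finite) :
    ∃ N : ℕ, ∀ y ∈ V, {n ∈ S | (fun k => scEval (P k) (n : ℤ_[p])) = y}.ncard ≤ N := by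
  classical
  by_cases hconst : ∀ k m, 0 < m → P k m = 0
  · set c : Fin r → ℤ_[p] := fun k => P k 0 with hc
    have hevalc : ∀ (n : ℕ) (k : Fin r), scEval (P k) (n : ℤ_[p]) = P k 0 := by
      intro n k
      rw [scEval, tsum_eq_single 0 (fun m hm => by
        rw [hconst k m (Nat.pos_of_ne_zero hm), zero_mul]), pow_zero, mul_one]
    refine ⟨{n ∈ S | (fun k => scEval (P k) (n : ℤ_[p])) = c}.ncard, fun y hy => ?_⟩
    by_cases hyc : y = c
    · subst hyc; exact le_refl _
    · have hemp : {n ∈ S | (fun k => scEval (P k) (n : ℤ_[p])) = y} = ∅ := by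
        rw [Set.eq_empty_iff_forall_notMem]
        rintro n ⟨hnS, hn⟩
        apply hyc
        rw [← hn]
        funext k
        exact (hevalc n k).symm ▸ rfl
      rw [hemp]
      simp
  · push_neg at hconst
    obtain ⟨k, m, hm, hne⟩ := hconst
    obtain ⟨N, hN⟩ := strassmann_uniform (hP k) hm hne
    refine ⟨N, fun y hy => ?_⟩
    have hfinY := hfin y hy
    set T : Finset ℤ_[p] := hfinY.toFinset.image (fun n : ℕ => (n : ℤ_[p])) with hT
    have hTsol : ∀ x ∈ T, scEval (P k) x = y k := by
      intro x hx
      obtain ⟨n, hn, rfl⟩ := Finset.mem_image.mp hx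
      rw [Set.Finite.mem_toFinset] at hn
      exact congrFun hn.2 k
    have hcard := hN (y k) T hTsol
    have heq : {n ∈ S | (fun k => scEval (P k) (n : ℤ_[p])) = y}.ncard = T.card := by
      rw [hT, Finset.card_image_of_injective _ (fun a b h => Nat.cast_injective h),
        Set.ncard_eq_toFinset_card _ hfinY]
    omega
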